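/- arXiv:2511.04952 — 4 statements merged into one kernel-verified Lean document; each statement's English description precedes it below -/
import Mathlib

section
/- Suppose F(S) is nonempty with first token t, so that S = t ++ Q. Then for every prefix Q' of Q, the tokenization F(t ++ Q') is nonempty and its first token is also t. (In the paper's wording: if the first token generated during the tokenization of S is t, and S' is a contiguous substring of S whose span contains the span of t, then the first token generated during the tokenization of S' is also t.) -/
variable {α : Type*} [DecidableEq α]

/-- The longest nonempty prefix of `S` belonging to the vocabulary `V`
(falling back to the first character of `S` if no such prefix exists). -/
noncomputable def firstTok (V : Finset (List α)) (S : List α) : List α :=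
  ((V.filter (fun w => w ≠ [] ∧ w <+: S)).toList.argmax List.length).getD (S.take 1)

lemma firstTok_ne_nil (V : Finset (List α)) (a : α) (s : List α) :
    firstTok V (a :: s) ≠ [] := by
  unfold firstTok
  cases h : ((V.filter (fun w => w ≠ [] ∧ w <+: (a :: s))).toList.argmax List.length) with
  | none => simp
  | some w =>
    have hw : w ∈ (V.filter (fun w => w ≠ [] ∧ w <+: (a :: s))).toList :=
      List.argmax_mem h
    rw [Finset.mem_toList, Finset.mem_filter] at hw
    simpa using hw.2.1

/-- Greedy (WordPiece-style) tokenization with vocabulary `V`. -/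
noncomputable def F (V : Finset (List α)) : List α → List (List α)
  | [] => []
  | a :: s =>
    firstTok V (a :: s) :: F V ((a :: s).drop (firstTok V (a :: s)).length)
termination_by S => S.length
decreasing_by
  have h := firstTok_ne_nil V a s
  have hpos : 0 < (firstTok V (a :: s)).length := List.length_pos_iff.mpr h
  simp only [List.length_drop, List.length_cons]
  omega

lemma firstTok_spec (V : Finset (List α)) (hsingle : ∀ a : α, [a] ∈ V)
    (a : α) (s : List α) :
    firstTok V (a :: s) ∈ V ∧ firstTok V (a :: s) <+: (a :: s) ∧
      ∀ w ∈ V, w ≠ [] → w <+: (a :: s) → w.length ≤ (firstTok V (a :: s)).length := by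
  unfold firstTok
  cases h : ((V.filter (fun w => w ≠ [] ∧ w <+: (a :: s))).toList.argmax List.length) with
  | none =>
    refine ⟨by simpa using hsingle a, by simp, ?_⟩
    intro w hw hw1 hw2
    exfalso
    have : w ∈ (V.filter (fun w => w ≠ [] ∧ w <+: (a :: s))).toList := by
      rw [Finset.mem_toList, Finset.mem_filter]; exact ⟨hw, by simp [hw1, hw2]⟩
    rw [List.argmax_eq_none] at h
    simp [h] at this
  | some m =>
    have hm : m ∈ (V.filter (fun w => w ≠ [] ∧ w <+: (a :: s))).toList :=
      List.argmax_mem h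
    rw [Finset.mem_toList, Finset.mem_filter] at hm
    refine ⟨hm.1, by simpa using hm.2.2, ?_⟩
    intro w hw hw1 hw2
    have : w ∈ (V.filter (fun w => w ≠ [] ∧ w <+: (a :: s))).toList := by
      rw [Finset.mem_toList, Finset.mem_filter]; exact ⟨hw, by simp [hw1, hw2]⟩
    simpa using List.le_of_mem_argmax this h

lemma firstTok_eq (V : Finset (List α)) (S t : List α)
    (htV : t ∈ V) (htne : t ≠ []) (htp : t <+: S)
    (hmax : ∀ w ∈ V, w ≠ [] → w <+: S → w.length ≤ t.length) :
    firstTok V S = t := by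
  unfold firstTok
  have htmem : t ∈ (V.filter (fun w => w ≠ [] ∧ w <+: S)).toList := by
    rw [Finset.mem_toList, Finset.mem_filter]; exact ⟨htV, by simp [htne, htp]⟩
  cases h : ((V.filter (fun w => w ≠ [] ∧ w <+: S)).toList.argmax List.length) with
  | none => rw [List.argmax_eq_none] at h; simp [h] at htmem
  | some m =>
    have hm : m ∈ (V.filter (fun w => w ≠ [] ∧ w <+: S)).toList :=
      List.argmax_mem h
    rw [Finset.mem_toList, Finset.mem_filter] at hm
    have h1 : m.length ≤ t.length := hmax m hm.1 hm.2.1 hm.2.2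
    have h2 : t.length ≤ m.length := List.le_of_mem_argmax htmem h
    have hlen : m.length = t.length := le_antisymm h1 h2
    have := (List.prefix_of_prefix_length_le hm.2.2 htp (le_of_eq hlen)).eq_of_length hlen
    simpa using this

/-- if the first token of `F V S` is `t`, with `S = t ++ Q`,
then for every prefix `Q'` of `Q`, the tokenization of `t ++ Q'` is nonempty
and its first token is also `t`. -/
theorem first_token_stable (V : Finset (List α))
    (hne : ∀ w ∈ V, w ≠ []) (hsingle : ∀ a : α, [a] ∈ V)
    (S t Q : List α) (hS : S = t ++ Q) (hhead : (F V S).head? = some t) :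
    ∀ Q' : List α, Q' <+: Q → (F V (t ++ Q')).head? = some t := by
  intro Q' hQ'
  -- S is nonempty
  cases hSc : S with
  | nil => rw [hSc] at hhead; simp [F] at hhead
  | cons a s =>
    rw [hSc] at hhead
    rw [F] at hhead
    simp only [List.head?_cons, Option.some.injEq] at hhead
    obtain ⟨htV, htp, hmax⟩ := firstTok_spec V hsingle a s
    rw [hhead] at htV htp hmax
    have htne : t ≠ [] := by rw [← hhead]; exact firstTok_ne_nil V a s
    have hS'p : t ++ Q' <+: (a :: s) := by
      rw [← hSc, hS]; obtain ⟨r, hr⟩ := hQ'; exact ⟨r, by simp [← hr]⟩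
    have hft : firstTok V (t ++ Q') = t := by
      apply firstTok_eq V _ t htV htne (List.prefix_append t Q')
      intro w hw hw1 hw2
      exact hmax w hw hw1 (hw2.trans hS'p)
    cases hc : t ++ Q' with
    | nil => exact absurd (List.append_eq_nil_iff.mp hc).1 htne
    | cons b u =>
      rw [F, List.head?_cons, ← hc, hft]
end

section
/- If the tokenization of a string S decomposes as F(S) = A ++ B ++ C (a concatenation of three lists of tokens), then F(join B) = B. Equivalently, if F(S) = [t_1, …, t_n], then for all indices 1 ≤ l ≤ r ≤ n, tokenizing the concatenated substring t_l ++ t_{l+1} ++ … ++ t_r yields exactly the token list [t_l, t_{l+1}, …, t_r]. -/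
variable {α : Type*} [DecidableEq α]

lemma prefix_eq_of_length {u v S : List α} (hu : u <+: S) (hv : v <+: S)
    (h : u.length = v.length) : u = v := by
  rw [List.prefix_iff_eq_take] at hu hv
  rw [hu, hv, h]

lemma firstTok_append (V : Finset (List α)) (hsingle : ∀ a : α, [a] ∈ V)
    {b X Y : List α} (hbne : b ≠ []) (hbX : b <+: X)
    (hft : firstTok V (X ++ Y) = b) : firstTok V X = b := by
  obtain ⟨a, s, rfl⟩ : ∃ a s, X = a :: s := by
    cases X with
    | nil => exact absurd (List.prefix_nil.mp hbX) hbne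
    | cons a s => exact ⟨a, s, rfl⟩
  obtain ⟨P1, P2, P3⟩ := firstTok_spec V hsingle a s
  obtain ⟨a', s', hXY⟩ : ∃ a' s', (a :: s) ++ Y = a' :: s' := ⟨a, s ++ Y, rfl⟩
  obtain ⟨Q1, Q2, Q3⟩ := firstTok_spec V hsingle a' s'
  rw [← hXY] at Q1 Q2 Q3
  rw [hft] at Q1 Q2 Q3
  set t := firstTok V (a :: s) with ht
  have htne : t ≠ [] := firstTok_ne_nil V a s
  have h1 : b.length ≤ t.length := P3 b Q1 hbne hbX
  have h2 : t.length ≤ b.length :=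
    Q3 t P1 htne (P2.trans (List.prefix_append _ _))
  exact prefix_eq_of_length (S := (a :: s) ++ Y)
    (P2.trans (List.prefix_append _ Y)) Q2 (le_antisymm h2 h1)

lemma join_F (V : Finset (List α)) (hsingle : ∀ a : α, [a] ∈ V) :
    ∀ S : List α, (F V S).flatten = S := by
  intro S
  induction S using F.induct V with
  | case1 => simp [F]
  | case2 a s ih =>
    rw [F]
    obtain ⟨_, hpre, _⟩ := firstTok_spec V hsingle a s
    simp only [List.flatten_cons, ih]
    exact List.prefix_iff_eq_append.mp hpre

lemma F_tokens_ne_nil (V : Finset (List α)) :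
    ∀ S : List α, ∀ t ∈ F V S, t ≠ [] := by
  intro S
  induction S using F.induct V with
  | case1 => simp [F]
  | case2 a s ih =>
    rw [F]
    rintro t ht
    rcases List.mem_cons.mp ht with rfl | ht
    · exact firstTok_ne_nil V a s
    · exact ih t ht

lemma F_suffix (V : Finset (List α)) (hsingle : ∀ a : α, [a] ∈ V) :
    ∀ (S : List α) (A R : List (List α)), F V S = A ++ R → F V R.flatten = R := by
  intro S
  induction S using F.induct V with
  | case1 =>
    intro A R h
    rw [F] at h
    obtain ⟨rfl, rfl⟩ := List.append_eq_nil_iff.mp h.symm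
    simp [F]
  | case2 a s ih =>
    intro A R h
    cases A with
    | nil =>
      simp only [List.nil_append] at h
      rw [← h, join_F V hsingle, h, ← h]
    | cons t A' =>
      rw [F] at h
      simp only [List.cons_append, List.cons.injEq] at h
      exact ih A' R h.2

lemma F_cons (V : Finset (List α)) {S : List α} (hS : S ≠ []) :
    F V S = firstTok V S :: F V (S.drop (firstTok V S).length) := by
  obtain ⟨a, s, rfl⟩ : ∃ a s, S = a :: s := by
    cases S with
    | nil => exact absurd rfl hS
    | cons a s => exact ⟨a, s, rfl⟩
  rw [F]

lemma F_prefix (V : Finset (List α)) (hsingle : ∀ a : α, [a] ∈ V)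
    (B : List (List α)) : ∀ (C : List (List α)) (Y : List α),
    (∀ b ∈ B, b ≠ []) → F V (B.flatten ++ Y) = B ++ C → F V B.flatten = B := by
  induction B with
  | nil => intro C Y _ _; simp [F]
  | cons b B' ih =>
    intro C Y hne h
    have hbne : b ≠ [] := hne b (by simp)
    have hjoin : ((b :: B').flatten : List α) = b ++ B'.flatten := by simp
    have hXne : (b ++ B'.flatten : List α) ≠ [] := by
      simp [hbne]
    have hXYne : ((b ++ B'.flatten) ++ Y : List α) ≠ [] := by
      simp [hbne]
    rw [hjoin] at h ⊢
    rw [F_cons V hXYne] at h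
    injection h with hft htail
    have hftX : firstTok V (b ++ B'.flatten) = b :=
      firstTok_append V hsingle hbne (List.prefix_append _ _) hft
    have hdrop1 : ((b ++ B'.flatten) ++ Y).drop b.length = B'.flatten ++ Y := by
      rw [List.append_assoc, List.drop_left]
    rw [hft, hdrop1] at htail
    have h1 : F V B'.flatten = B' :=
      ih C Y (fun x hx => hne x (by simp [hx])) htail
    rw [F_cons V hXne, hftX, List.drop_left, h1]

/-- if `F V S` decomposes as `A ++ B ++ C`, then tokenizing the
concatenation of the middle block of tokens reproduces exactly that block. -/
theorem tokenize_middle_block (V : Finset (List α))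
    (hne : ∀ w ∈ V, w ≠ []) (hsingle : ∀ a : α, [a] ∈ V)
    (S : List α) (A B C : List (List α)) (h : F V S = A ++ B ++ C) :
    F V B.flatten = B := by
  have hBC : F V (B ++ C).flatten = B ++ C := by
    apply F_suffix V hsingle S A (B ++ C)
    rw [h, List.append_assoc]
  have hbne : ∀ b ∈ B, b ≠ [] := by
    intro b hb
    exact F_tokens_ne_nil V S b (by rw [h]; simp [hb])
  have := F_prefix V hsingle B C C.flatten hbne (by rw [← List.flatten_append]; exact hBC)
  exact this
end

section
/- Let L, M, R be strings such that F(L ++ M) = F(L) ++ F(M) and the length of M is at least T (the maximum length of a vocabulary word). Then F(L ++ M ++ R) = F(L) ++ F(M ++ R); that is, the token boundary at the end of L persists no matter what string R is appended after M. -/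
variable {α : Type*} [DecidableEq α]

lemma F_nil (V : Finset (List α)) : F V ([] : List α) = [] := by rw [F]

lemma F_unfold (V : Finset (List α)) (a : α) (s : List α) :
    F V (a :: s) = firstTok V (a :: s) :: F V ((a :: s).drop (firstTok V (a :: s)).length) := by
  rw [F]

lemma firstTok_length_le (V : Finset (List α)) (a : α) (s : List α) :
    (firstTok V (a :: s)).length ≤ (a :: s).length := by
  unfold firstTok
  cases h : ((V.filter (fun w => w ≠ [] ∧ w <+: (a :: s))).toList.argmax List.length) with
  | none => simp
  | some w =>
    have hw : w ∈ (V.filter (fun w => w ≠ [] ∧ w <+: (a :: s))).toList :=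
      List.argmax_mem h
    rw [Finset.mem_toList, Finset.mem_filter] at hw
    simpa using hw.2.2.length_le

lemma firstTok_append_s4 (V : Finset (List α)) (T : ℕ) (hT : T = V.sup List.length)
    (S R : List α) (hS : S ≠ []) (hlen : T ≤ S.length) :
    firstTok V (S ++ R) = firstTok V S := by
  have hfilter : V.filter (fun w => w ≠ [] ∧ w <+: (S ++ R))
      = V.filter (fun w => w ≠ [] ∧ w <+: S) := by
    apply Finset.filter_congr
    intro w hw
    have hwlen : w.length ≤ S.length := by
      have : w.length ≤ V.sup List.length := Finset.le_sup hw
      omega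
    constructor
    · rintro ⟨h1, h2⟩
      exact ⟨h1, List.prefix_of_prefix_length_le h2 (List.prefix_append S R) hwlen⟩
    · rintro ⟨h1, h2⟩
      exact ⟨h1, h2.trans (List.prefix_append S R)⟩
  have htake : (S ++ R).take 1 = S.take 1 := by
    cases S with
    | nil => exact absurd rfl hS
    | cons a s => rfl
  unfold firstTok
  rw [hfilter, htake]

lemma boundary_aux (V : Finset (List α)) (T : ℕ) (hT : T = V.sup List.length) :
    ∀ n (L M R : List α), L.length ≤ n →
    F V (L ++ M) = F V L ++ F V M → T ≤ M.length →
    F V (L ++ M ++ R) = F V L ++ F V (M ++ R) := by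
  intro n
  induction n with
  | zero =>
    intro L M R hL h1 hM
    have : L = [] := List.eq_nil_of_length_eq_zero (Nat.le_zero.mp hL)
    subst this
    simp [F_nil]
  | succ n ih =>
    intro L M R hL h1 hM
    cases L with
    | nil => simp [F_nil]
    | cons a s =>
      set t := firstTok V (a :: s) with ht
      have htlen : t.length ≤ (a :: s).length := firstTok_length_le V a s
      have htpos : 0 < t.length := List.length_pos_iff.mpr (firstTok_ne_nil V a s)
      have h1' : F V (a :: (s ++ M)) = F V (a :: s) ++ F V M := h1
      rw [F_unfold (s := s ++ M), F_unfold (s := s), List.cons_append] at h1'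
      injection h1' with heqt heqrest
      have hdrop1 : (a :: (s ++ M)).drop t.length = (a :: s).drop t.length ++ M := by
        rw [show a :: (s ++ M) = (a :: s) ++ M from rfl,
          List.drop_append_of_le_length htlen]
      rw [heqt, hdrop1] at heqrest
      have hlen2 : ((a :: s).drop t.length).length ≤ n := by
        rw [List.length_drop]
        simp only [List.length_cons] at hL ⊢
        omega
      have key : F V ((a :: s).drop t.length ++ M ++ R)
          = F V ((a :: s).drop t.length) ++ F V (M ++ R) :=
        ih ((a :: s).drop t.length) M R hlen2 heqrest hM
      have hft2 : firstTok V (a :: (s ++ M ++ R)) = t := by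
        have he : a :: (s ++ M ++ R) = (a :: (s ++ M)) ++ R := by simp
        rw [he, firstTok_append_s4 V T hT _ R (by simp)
          (by simp only [List.length_cons, List.length_append]; omega), heqt]
      have hdrop2 : (a :: (s ++ M ++ R)).drop t.length
          = (a :: s).drop t.length ++ M ++ R := by
        rw [show a :: (s ++ M ++ R) = (a :: s) ++ M ++ R from by simp,
          List.append_assoc, List.drop_append_of_le_length htlen, List.append_assoc]
      show F V (a :: (s ++ M ++ R)) = F V (a :: s) ++ F V (M ++ R)
      rw [F_unfold, hft2, hdrop2, key, F_unfold (a := a) (s := s), ← ht,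
        List.cons_append]

/-- if the token boundary between `L` and `M` is respected
(`F (L ++ M) = F L ++ F M`) and `M` has length at least `T` (the maximal
length of a vocabulary word), then this boundary persists after appending any
string `R`. -/
theorem boundary_persists (V : Finset (List α))
    (hne : ∀ w ∈ V, w ≠ []) (hsingle : ∀ a : α, [a] ∈ V)
    (T : ℕ) (hT : T = V.sup List.length)
    (L M R : List α)
    (h1 : F V (L ++ M) = F V L ++ F V M)
    (hM : T ≤ M.length) :
    F V (L ++ M ++ R) = F V L ++ F V (M ++ R) := by

  exact boundary_aux V T hT L.length L M R le_rfl h1 hM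
end

section
/- Let S = L ++ M ++ R, where L, M, R are strings. If F(L ++ M) = F(L) ++ F(M), F(M ++ R) = F(M) ++ F(R), and the length of M is at least T (the maximum length of a vocabulary word), then F(S) = F(L) ++ F(M) ++ F(R). (This is the paper's main appendix result: tokenizing the two overlapping chunks L ++ M and M ++ R independently and merging them across the shared middle part M reproduces the tokenization of the full string S.) -/
variable {α : Type*} [DecidableEq α]

lemma firstTok_prefix (V : Finset (List α)) (S : List α) : firstTok V S <+: S := by
  unfold firstTok
  cases h : ((V.filter (fun w => w ≠ [] ∧ w <+: S)).toList.argmax List.length) with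
  | none => simpa using List.take_prefix 1 S
  | some w =>
    have hw := List.argmax_mem h
    rw [Finset.mem_toList, Finset.mem_filter] at hw
    simpa using hw.2.2

lemma firstTok_append_of_le (V : Finset (List α)) {X : List α} (Y : List α)
    (hX : X ≠ []) (h : ∀ w ∈ V, w.length ≤ X.length) :
    firstTok V (X ++ Y) = firstTok V X := by
  have hfil : V.filter (fun w => w ≠ [] ∧ w <+: X ++ Y)
      = V.filter (fun w => w ≠ [] ∧ w <+: X) := by
    apply Finset.filter_congr
    intro w hw
    constructor
    · rintro ⟨hwne, hp⟩
      refine ⟨hwne, ?_⟩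
      have := List.prefix_iff_eq_take.mp hp
      rw [List.take_append_of_le_length (h w hw)] at this
      rw [this]
      exact List.take_prefix _ _
    · rintro ⟨hwne, hp⟩
      exact ⟨hwne, hp.trans (List.prefix_append X Y)⟩
  have htake : (X ++ Y).take 1 = X.take 1 := by
    apply List.take_append_of_le_length
    exact Nat.one_le_iff_ne_zero.mpr (fun h0 => hX (List.length_eq_zero_iff.mp h0))
  unfold firstTok
  rw [hfil, htake]

lemma aux_merge (V : Finset (List α)) (T : ℕ) (hT : T = V.sup List.length)
    (M R : List α) (hM : T ≤ M.length)
    (h2 : F V (M ++ R) = F V M ++ F V R) :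
    ∀ n (L : List α), L.length ≤ n →
      F V (L ++ M) = F V L ++ F V M →
      F V (L ++ M ++ R) = F V L ++ F V M ++ F V R := by
  have hlen : ∀ w ∈ V, w.length ≤ T := by
    intro w hw; rw [hT]; exact Finset.le_sup hw
  intro n
  induction n with
  | zero =>
    intro L hL h1
    have : L = [] := List.length_eq_zero_iff.mp (Nat.le_zero.mp hL)
    subst this
    simpa [F] using h2
  | succ n ih =>
    intro L hL h1
    cases L with
    | nil => simpa [F] using h2
    | cons a s =>
      set L := a :: s with hLdef
      have hLne : L ≠ [] := by simp [hLdef]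
      have hLMne : L ++ M ≠ [] := by simp [hLdef]
      have hle : ∀ w ∈ V, w.length ≤ (L ++ M).length := by
        intro w hw
        calc w.length ≤ T := hlen w hw
        _ ≤ M.length := hM
        _ ≤ (L ++ M).length := by simp
      -- first token of whole string equals first token of L ++ M
      have hft : firstTok V (L ++ M ++ R) = firstTok V (L ++ M) :=
        firstTok_append_of_le V R hLMne hle
      -- from h1: first token of L ++ M equals first token of L
      have hLM : L ++ M = a :: (s ++ M) := by simp [hLdef]
      have e1 : F V (L ++ M) = firstTok V (L ++ M) ::
          F V ((L ++ M).drop (firstTok V (L ++ M)).length) := by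
        rw [hLM, F]
      have e2 : F V L = firstTok V L ::
          F V (L.drop (firstTok V L).length) := by
        rw [hLdef, F]
      rw [e1, e2] at h1
      have hhead : firstTok V (L ++ M) = firstTok V L := (List.cons.inj h1).1
      rw [hhead] at h1
      have hinj := List.cons.inj h1
      have htail := hinj.2
      set t := firstTok V L with htdef
      have htpre : t <+: L := firstTok_prefix V L
      have htlen : t.length ≤ L.length := htpre.length_le
      have htne : t ≠ [] := by rw [htdef, hLdef]; exact firstTok_ne_nil V a s
      have htpos : 0 < t.length := List.length_pos_iff.mpr htne
      have hdrop : (L ++ M).drop t.length = L.drop t.length ++ M :=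
        List.drop_append_of_le_length htlen
      rw [hdrop] at htail
      have hlen' : (L.drop t.length).length ≤ n := by
        rw [List.length_drop]
        rw [hLdef] at hL ⊢
        simp at hL ⊢
        omega
      have hIH := ih (L.drop t.length) hlen' htail
      -- compute F V (L ++ M ++ R)
      have hLMR : L ++ M ++ R = a :: (s ++ M ++ R) := by simp [hLdef]
      have e3 : F V (L ++ M ++ R) = firstTok V (L ++ M ++ R) ::
          F V ((L ++ M ++ R).drop (firstTok V (L ++ M ++ R)).length) := by
        rw [hLMR, F]
      rw [hft, hhead] at e3
      have hdrop2 : (L ++ M ++ R).drop t.length = L.drop t.length ++ M ++ R := by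
        rw [List.append_assoc, List.drop_append_of_le_length htlen, List.append_assoc]
      rw [hdrop2, hIH] at e3
      rw [e3, e2]
      simp

/-- main appendix result: if `F (L ++ M) = F L ++ F M`,
`F (M ++ R) = F M ++ F R`, and the overlap `M` has length at least `T`
(the maximal length of a vocabulary word), then tokenizing `S = L ++ M ++ R`
gives `F L ++ F M ++ F R`. -/
theorem lossless_overlap_merge (V : Finset (List α))
    (hne : ∀ w ∈ V, w ≠ []) (hsingle : ∀ a : α, [a] ∈ V)
    (T : ℕ) (hT : T = V.sup List.length)
    (L M R : List α)
    (h1 : F V (L ++ M) = F V L ++ F V M)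
    (h2 : F V (M ++ R) = F V M ++ F V R)
    (hM : T ≤ M.length) :
    F V (L ++ M ++ R) = F V L ++ F V M ++ F V R := by
  exact aux_merge V T hT M R hM h2 L.length L le_rfl h1
end
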